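/- Let K ⊆ ℝ^d be an ℝ-cone and suppose that w ∈ ℝ^d satisfies ⟨u,w⟩ > 0 for all nonzero u ∈ K. Then ⟨z,w⟩ ≠ 0 for all nonzero z in the complexification K^ℂ. -/

import Mathlib

open scoped BigOperators Pointwise

noncomputable section

/-- The Euclidean norm of a finitely-indexed vector (real or complex entries). -/
def enorm' {ι : Type*} [Fintype ι] {E : Type*} [Norm E] (u : ι → E) : ℝ :=
  Real.sqrt (∑ i, ‖u i‖ ^ 2)

/-- The operator norm of a real matrix induced by the Euclidean norm. -/
def opNorm {ι : Type*} [Fintype ι] (A : Matrix ι ι ℝ) : ℝ :=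
  sSup ((fun u : ι → ℝ => enorm' (A.mulVec u)) '' {u : ι → ℝ | enorm' u = 1})

/-- A multicone for a set of matrices (Definition 1.2). -/
def IsMulticone {ι : Type*} [Fintype ι] (S : Set (Matrix ι ι ℝ)) {m : ℕ}
    (K : Fin m → Set (ι → ℝ)) (w : ι → ℝ) : Prop :=
  (∀ j, IsClosed (K j)) ∧ (∀ j, Convex ℝ (K j)) ∧ (∀ j, (interior (K j)).Nonempty) ∧
  (∀ j, ∀ c : ℝ, 0 ≤ c → ∀ u ∈ K j, c • u ∈ K j) ∧
  (∑ i, w i ^ 2 = 1) ∧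
  (∀ u ∈ ⋃ j, K j, u ≠ 0 → 0 < ∑ i, u i * w i) ∧
  (∀ A ∈ S, ∀ j, ∃ ℓ, ∀ u ∈ K j, u ≠ 0 →
    A.mulVec u ∈ interior (K ℓ) ∨ -A.mulVec u ∈ interior (K ℓ)) ∧
  (∀ j₁ j₂, j₁ ≠ j₂ → K j₁ ∩ K j₂ = {0})

/-- The set of matrices is multipositive if it admits a multicone. -/
def IsMultipositive {ι : Type*} [Fintype ι] (S : Set (Matrix ι ι ℝ)) : Prop :=
  ∃ (m : ℕ) (_ : 0 < m) (K : Fin m → Set (ι → ℝ)) (w : ι → ℝ), IsMulticone S K w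

/-- The semigroup generated by a set of matrices. -/
def semigroupOf {ι : Type*} [Fintype ι] [DecidableEq ι] (S : Set (Matrix ι ι ℝ)) :
    Set (Matrix ι ι ℝ) :=
  {B | ∃ l : List (Matrix ι ι ℝ), l ≠ [] ∧ (∀ M ∈ l, M ∈ S) ∧ B = l.prod}

/-- The complexification of a set in ℝ^ι. -/
def complexify {ι : Type*} (K : Set (ι → ℝ)) : Set (ι → ℂ) :=
  {z | ∃ (c : ℂ) (u v : ι → ℝ), u ∈ K ∧ v ∈ K ∧
    z = fun i => c * (((u i : ℂ) + (v i : ℂ)) + Complex.I * ((u i : ℂ) - (v i : ℂ)))}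

/-- The action of a real matrix on complex vectors. -/
def mulVecC {ι : Type*} [Fintype ι] (A : Matrix ι ι ℝ) (z : ι → ℂ) : ι → ℂ :=
  (A.map (fun x : ℝ => (x : ℂ))).mulVec z

/-- An ℝ-cone: closed, convex, nonempty interior, positively homogeneous, proper. -/
def IsRCone {ι : Type*} [Fintype ι] (K : Set (ι → ℝ)) : Prop :=
  IsClosed K ∧ Convex ℝ K ∧ (interior K).Nonempty ∧
  (∀ c : ℝ, 0 < c → c • K = K) ∧ K ∩ (-K) = {0}

end

/-- Lemma 3.5: if ⟨u,w⟩ > 0 for all nonzero u in the ℝ-cone K, then ⟨z,w⟩ ≠ 0 for all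
nonzero z in the complexification K^ℂ. -/
theorem stmt11 {d : ℕ} (K : Set (Fin d → ℝ)) (hK : IsRCone K) (w : Fin d → ℝ)
    (hw : ∀ u ∈ K, u ≠ 0 → 0 < ∑ i, u i * w i) :
    ∀ z ∈ complexify K, z ≠ 0 → (∑ i, z i * (w i : ℂ)) ≠ 0 := by
  rintro z ⟨c, u, v, hu, hv, rfl⟩ hz
  have hc : c ≠ 0 := by
    rintro rfl
    exact hz (funext fun i => by simp)
  set a := ∑ i, u i * w i with ha
  set b := ∑ i, v i * w i with hb
  have hab : 0 < a + b := by
    have hazero : u = 0 → a = 0 := by rintro rfl; simp [ha]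
    have hbzero : v = 0 → b = 0 := by rintro rfl; simp [hb]
    by_cases hu0 : u = 0
    · by_cases hv0 : v = 0
      · exact absurd (funext fun i => by simp [hu0, hv0]) hz
      · simpa [hazero hu0] using hw v hv hv0
    · by_cases hv0 : v = 0
      · simpa [hbzero hv0] using hw u hu hu0
      · exact add_pos (hw u hu hu0) (hw v hv hv0)
  have key : (∑ i, (c * (((u i : ℂ) + (v i : ℂ)) + Complex.I * ((u i : ℂ) - (v i : ℂ)))) * (w i : ℂ))
      = c * (((a : ℝ) + (b : ℝ) : ℂ) + Complex.I * ((a : ℝ) - (b : ℝ))) := by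
    rw [ha, hb]
    push_cast
    rw [← Finset.sum_add_distrib, ← Finset.sum_sub_distrib, Finset.mul_sum,
      ← Finset.sum_add_distrib, Finset.mul_sum]
    exact Finset.sum_congr rfl fun i _ => by ring
  rw [key]
  refine mul_ne_zero hc fun h => ?_
  have := congrArg Complex.re h
  simp at this
  linarith
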